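/- Let m be divisible by 8, r = m/2, t = m/8, and consider the Kneser-type graph K(m,r,t) whose vertices are the r-subsets of an m-set, with two subsets adjacent iff their intersection has size < t. Assign to each vertex S the unit vector in ℝ^m whose coordinates are 1/√m on elements of S and -1/√m elsewhere. Then for any two adjacent vertices S_i, S_j, the inner product of their vectors is at most -1/2; i.e., K(m,r,t) is vector 3-colorable. -/

import Mathlib

open scoped RealInnerProductSpace

theorem kneser_graph_vector_three_colorable (m : ℕ) (hm : 8 ∣ m) (hm0 : 0 < m)
    (S T : Finset (Fin m)) (hS : S.card = m / 2) (hT : T.card = m / 2)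
    (hadj : (S ∩ T).card < m / 8)
    (x y : EuclideanSpace ℝ (Fin m))
    (hx : ∀ j, x j = if j ∈ S then 1 / Real.sqrt m else -(1 / Real.sqrt m))
    (hy : ∀ j, y j = if j ∈ T then 1 / Real.sqrt m else -(1 / Real.sqrt m)) :
    ⟪x, y⟫ ≤ -1 / 2 := by
  obtain ⟨n, rfl⟩ := hm
  have hn0 : 0 < n := by omega
  have hm8 : (8 * n) / 8 = n := by omega
  have hm2 : (8 * n) / 2 = 4 * n := by omega
  rw [hm8] at hadj
  rw [hm2] at hS hT
  set D : Finset (Fin (8 * n)) := (S \ T) ∪ (T \ S) with hD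
  have hDcard : D.card = 8 * n - 2 * (S ∩ T).card := by
    rw [hD, Finset.card_union_of_disjoint disjoint_sdiff_sdiff]
    have h1 := Finset.card_sdiff_add_card_inter S T
    have h2 := Finset.card_sdiff_add_card_inter T S
    rw [Finset.inter_comm] at h2
    omega
  have hmpos : (0:ℝ) < ((8 * n : ℕ) : ℝ) := by
    have : 0 < 8 * n := by omega
    exact_mod_cast this
  have hcsq : (1 / Real.sqrt (8 * n : ℕ)) * (1 / Real.sqrt (8 * n : ℕ))
      = 1 / ((8 * n : ℕ) : ℝ) := by
    rw [div_mul_div_comm, one_mul, Real.mul_self_sqrt hmpos.le]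
  have hterm : ∀ j, x j * y j
      = if j ∈ D then -(1 / ((8 * n : ℕ) : ℝ)) else 1 / ((8 * n : ℕ) : ℝ) := by
    intro j
    rw [hx, hy]
    by_cases h1 : j ∈ S <;> by_cases h2 : j ∈ T
    · have hjD : j ∉ D := by simp [hD, h1, h2]
      rw [if_pos h1, if_pos h2, if_neg hjD, hcsq]
    · have hjD : j ∈ D := by simp [hD, h1, h2]
      rw [if_pos h1, if_neg h2, if_pos hjD, mul_neg, hcsq]
    · have hjD : j ∈ D := by simp [hD, h1, h2]
      rw [if_neg h1, if_pos h2, if_pos hjD, neg_mul, hcsq]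
    · have hjD : j ∉ D := by simp [hD, h1, h2]
      rw [if_neg h1, if_neg h2, if_neg hjD, neg_mul_neg, hcsq]
  have hinner : ⟪x, y⟫ = ∑ j, x j * y j := by
    rw [PiLp.inner_apply]
    simp [RCLike.inner_apply]
    exact Finset.sum_congr rfl fun j _ => mul_comm _ _
  rw [hinner]
  have hsplit : ∑ j, x j * y j
      = (D.card : ℝ) * (-(1 / ((8 * n : ℕ) : ℝ)))
        + (Dᶜ.card : ℝ) * (1 / ((8 * n : ℕ) : ℝ)) := by
    simp_rw [hterm]
    rw [← Finset.sum_add_sum_compl D]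
    congr 1
    · rw [Finset.sum_congr rfl fun j hj => if_pos hj, Finset.sum_const,
        nsmul_eq_mul]
    · rw [Finset.sum_congr rfl fun j hj => if_neg (Finset.mem_compl.mp hj),
        Finset.sum_const, nsmul_eq_mul]
  rw [hsplit]
  have hsum : Dᶜ.card + D.card = 8 * n := by
    have := Finset.card_compl D
    simp at this
    omega
  have hDge : 6 * n + 2 ≤ D.card := by omega
  have hDgeR : (6 * (n:ℝ) + 2) ≤ (D.card : ℝ) := by exact_mod_cast hDge
  have hcomplR : (Dᶜ.card : ℝ) = 8 * (n:ℝ) - (D.card : ℝ) := by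
    have : ((Dᶜ.card + D.card : ℕ) : ℝ) = ((8 * n : ℕ) : ℝ) := by rw [hsum]
    push_cast at this
    linarith
  rw [hcomplR]
  have h8n : ((8 * n : ℕ) : ℝ) = 8 * (n:ℝ) := by push_cast; ring
  rw [h8n]
  have hnR : (1 : ℝ) ≤ (n : ℝ) := by exact_mod_cast hn0
  have hpos : (0:ℝ) < 8 * (n:ℝ) := by linarith
  have key : (D.card : ℝ) * (-(1 / (8 * (n:ℝ)))) + (8 * (n:ℝ) - (D.card:ℝ)) * (1 / (8 * (n:ℝ)))
      = (8 * (n:ℝ) - 2 * (D.card:ℝ)) / (8 * (n:ℝ)) := by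
    field_simp
    ring
  rw [key, div_le_iff₀ hpos]
  linarith
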